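/- Let p ≥ 1, suppose U_m > 0 for all 1 ≤ m ≤ p, and let S ⊆ ZMod L with |S| = N, E(S) > 0, such that S has a gap of length p+1 at some site (there is i ∈ S with i + j ∉ S for all integers 1 ≤ j ≤ p+1). Then there exist an integer k ≥ 1 and a configuration S' ⊆ ZMod (k·L) with |S'| = k·N and E_{kL}(S') < k · E_L(S); that is, a configuration of the same density with strictly lower energy density exists. -/

import Mathlib

/-- Atomic-limit energy of a configuration (Fock state) `S` of occupied sites on a
periodic chain of `L` sites, with interaction range `p` and two-body potentials `U`:
`E(S) = ∑_{i ∈ ZMod L} ∑_{m=1}^{p} U m · [i ∈ S] · [i + m ∈ S]`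
(the outer sum over `ZMod L` is written via its enumeration `i = 0, …, L-1`). -/
noncomputable def energy (L p : ℕ) (U : ℕ → ℝ) (S : Finset (ZMod L)) : ℝ :=
  ∑ i ∈ Finset.range L, ∑ m ∈ Finset.Icc 1 p,
    U m * (if (i : ZMod L) ∈ S then (1 : ℝ) else 0) *
      (if (i : ZMod L) + (m : ZMod L) ∈ S then (1 : ℝ) else 0)


namespace ALaux

/-- indicator helpers on lists of booleans, reading out of range as `false` -/
noncomputable def eop (p : ℕ) (U : ℕ → ℝ) (l : List Bool) : ℝ :=
  ∑ x ∈ Finset.range l.length, ∑ m ∈ Finset.Icc 1 p,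
    U m * (if l.getD x false = true then (1 : ℝ) else 0) *
      (if l.getD (x + m) false = true then (1 : ℝ) else 0)

def cnt (l : List Bool) : ℕ :=
  ∑ x ∈ Finset.range l.length, (if l.getD x false = true then 1 else 0)

def repL : ℕ → List Bool → List Bool
  | 0, _ => []
  | n+1, v => v ++ repL n v

lemma length_repL (n : ℕ) (v : List Bool) : (repL n v).length = n * v.length := by
  induction n with
  | zero => simp [repL]
  | succ n ih => simp [repL, ih, Nat.succ_mul]; ring

lemma getD_ge (l : List Bool) {x : ℕ} (h : l.length ≤ x) : l.getD x false = false := by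
  simp [List.getD_eq_getElem?_getD, List.getElem?_eq_none h]

lemma getD_app_lt (u v : List Bool) {x : ℕ} (h : x < u.length) :
    (u ++ v).getD x false = u.getD x false := by
  simp [List.getD_eq_getElem?_getD, List.getElem?_append, h]

lemma getD_app_ge (u v : List Bool) {x : ℕ} (h : u.length ≤ x) :
    (u ++ v).getD x false = v.getD (x - u.length) false := by
  simp [List.getD_eq_getElem?_getD, List.getElem?_append_right h]

lemma getD_F (n x : ℕ) : (List.replicate n false).getD x false = false := by
  simp [List.getD_eq_getElem?_getD, List.getElem?_replicate]
  split <;> simp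

lemma sumRangeAdd {M : Type*} [AddCommMonoid M] (f : ℕ → M) (a b : ℕ) :
    ∑ x ∈ Finset.range (a + b), f x
      = (∑ x ∈ Finset.range a, f x) + ∑ x ∈ Finset.range b, f (a + x) := by
  induction b with
  | zero => simp
  | succ n ih =>
      rw [← Nat.add_assoc, Finset.sum_range_succ, ih, Finset.sum_range_succ, add_assoc]

/-- "starts with `p` empty sites" -/
def startsF (p : ℕ) (l : List Bool) : Prop := ∀ j < p, l.getD j false = false

lemma startsF_nil (p : ℕ) : startsF p [] := by
  intro j _; simp [List.getD]

lemma startsF_F (p n : ℕ) (h : p ≤ n) : startsF p (List.replicate n false) := by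
  intro j _; exact getD_F n j

lemma startsF_append (p : ℕ) {u v : List Bool} (hu : startsF p u) (hv : startsF p v) :
    startsF p (u ++ v) := by
  intro j hj
  rcases lt_or_ge j u.length with h | h
  · rw [getD_app_lt _ _ h]; exact hu j hj
  · rw [getD_app_ge _ _ h]; exact hv _ (lt_of_le_of_lt (Nat.sub_le _ _) hj)

lemma startsF_app_left (p : ℕ) {u : List Bool} (v : List Bool) (hu : startsF p u)
    (hlen : p ≤ u.length) : startsF p (u ++ v) := by
  intro j hj
  rw [getD_app_lt _ _ (lt_of_lt_of_le hj hlen)]; exact hu j hj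

lemma startsF_repL (p n : ℕ) {v : List Bool} (hv : startsF p v) : startsF p (repL n v) := by
  induction n with
  | zero => exact startsF_nil p
  | succ n ih => exact startsF_append p hv ih

lemma cnt_append (u v : List Bool) : cnt (u ++ v) = cnt u + cnt v := by
  unfold cnt
  rw [List.length_append, sumRangeAdd]
  congr 1
  · exact Finset.sum_congr rfl fun x hx => by
      rw [getD_app_lt _ _ (Finset.mem_range.1 hx)]
  · exact Finset.sum_congr rfl fun x _ => by
      rw [getD_app_ge _ _ (Nat.le_add_right _ _), Nat.add_sub_cancel_left]

lemma cnt_F (n : ℕ) : cnt (List.replicate n false) = 0 := by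
  unfold cnt
  exact Finset.sum_eq_zero fun x _ => by rw [getD_F]; simp

lemma cnt_true : cnt [true] = 1 := by
  simp [cnt]
  decide

lemma cnt_repL (n : ℕ) (v : List Bool) : cnt (repL n v) = n * cnt v := by
  induction n with
  | zero => simp [repL, cnt]
  | succ n ih => rw [repL, cnt_append, ih, Nat.succ_mul]; ring

lemma eop_append (p : ℕ) (U : ℕ → ℝ) (u v : List Bool) (hv : startsF p v) :
    eop p U (u ++ v) = eop p U u + eop p U v := by
  unfold eop
  rw [List.length_append, sumRangeAdd]
  congr 1
  · refine Finset.sum_congr rfl fun x hx => Finset.sum_congr rfl fun m hm => ?_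
    have hxu := Finset.mem_range.1 hx
    have hm' := Finset.mem_Icc.1 hm
    rw [getD_app_lt _ _ hxu]
    rcases lt_or_ge (x + m) u.length with h | h
    · rw [getD_app_lt _ _ h]
    · rw [getD_app_ge _ _ h, getD_ge u h, hv _ (by omega)]
  · refine Finset.sum_congr rfl fun x _ => Finset.sum_congr rfl fun m _ => ?_
    have e1 : u.length + x + m - u.length = x + m := by omega
    rw [getD_app_ge _ _ (Nat.le_add_right _ _), Nat.add_sub_cancel_left,
      getD_app_ge _ _ (by omega : u.length ≤ u.length + x + m), e1]

lemma eop_F (p : ℕ) (U : ℕ → ℝ) (n : ℕ) : eop p U (List.replicate n false) = 0 := by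
  unfold eop
  refine Finset.sum_eq_zero fun x _ => Finset.sum_eq_zero fun m _ => by
    rw [getD_F]; simp

lemma eop_true (p : ℕ) (U : ℕ → ℝ) (hp : 1 ≤ p) : eop p U [true] = 0 := by
  unfold eop
  refine Finset.sum_eq_zero fun x hx => Finset.sum_eq_zero fun m hm => ?_
  have hm' := Finset.mem_Icc.1 hm
  have hx' := Finset.mem_range.1 hx
  rw [getD_ge (x := x + m) [true] (show (1:ℕ) ≤ x + m by omega)]
  simp

lemma eop_front (p : ℕ) (U : ℕ → ℝ) (n : ℕ) (v : List Bool) :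
    eop p U (List.replicate n false ++ v) = eop p U v := by
  unfold eop
  rw [List.length_append, List.length_replicate, sumRangeAdd]
  have h1 : ∑ x ∈ Finset.range n, ∑ m ∈ Finset.Icc 1 p,
      (U m * (if (List.replicate n false ++ v).getD x false = true then (1:ℝ) else 0) *
        (if (List.replicate n false ++ v).getD (x + m) false = true then (1:ℝ) else 0)) = 0 := by
    refine Finset.sum_eq_zero fun x hx => Finset.sum_eq_zero fun m _ => ?_
    rw [getD_app_lt _ _ (by simpa using Finset.mem_range.1 hx), getD_F]
    simp
  rw [h1, zero_add]
  refine Finset.sum_congr rfl fun x _ => Finset.sum_congr rfl fun m _ => ?_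
  have e1 : n + x - n = x := by omega
  have e2 : n + x + m - n = x + m := by omega
  rw [getD_app_ge _ _ (by simp : (List.replicate n false).length ≤ n + x),
    getD_app_ge _ _ (by simp only [List.length_replicate]; omega :
      (List.replicate n false).length ≤ n + x + m)]
  simp only [List.length_replicate]
  rw [e1, e2]

lemma eop_repL (p : ℕ) (U : ℕ → ℝ) (n : ℕ) (v : List Bool) (hv : startsF p v) :
    eop p U (repL n v) = (n : ℝ) * eop p U v := by
  induction n with
  | zero => simp [repL, eop]
  | succ n ih =>
      rw [repL, eop_append p U v _ (startsF_repL p n hv), ih]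
      push_cast
      ring


lemma getD_set_self (l : List Bool) {k : ℕ} (hk : k < l.length) (b : Bool) :
    (l.set k b).getD k false = b := by
  simp [List.getD_eq_getElem?_getD, List.getElem?_set, hk]

lemma getD_set_ne (l : List Bool) {k x : ℕ} (h : x ≠ k) (b : Bool) :
    (l.set k b).getD x false = l.getD x false := by
  simp [List.getD_eq_getElem?_getD, List.getElem?_set, (Ne.symm h)]

lemma ind_le_ind_set (l : List Bool) (k y : ℕ) :
    (0:ℝ) ≤ (if (l.set k false).getD y false = true then (1:ℝ) else 0) ∧
    (if (l.set k false).getD y false = true then (1:ℝ) else 0)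
      ≤ (if l.getD y false = true then (1:ℝ) else 0) := by
  constructor
  · split <;> norm_num
  · rcases eq_or_ne y k with rfl | h
    · rcases lt_or_ge y l.length with hk | hk
      · rw [getD_set_self l hk]
        simp only [Bool.false_eq_true, if_false]
        split <;> norm_num
      · rw [List.set_eq_of_length_le hk]
    · rw [getD_set_ne l h]

lemma eop_set_le (p : ℕ) (U : ℕ → ℝ) (hU : ∀ m : ℕ, 1 ≤ m → m ≤ p → 0 < U m)
    (B : List Bool) {a m₀ : ℕ} (hm : m₀ ∈ Finset.Icc 1 p) (ha : a < B.length)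
    (hBa : B.getD a false = true) (hBb : B.getD (a + m₀) false = true) :
    U m₀ ≤ eop p U B - eop p U (B.set a false) := by
  have hm' := Finset.mem_Icc.1 hm
  set B' := B.set a false with hB'
  have hUpos : ∀ m ∈ Finset.Icc 1 p, 0 ≤ U m := fun m hm =>
    le_of_lt (hU m (Finset.mem_Icc.1 hm).1 (Finset.mem_Icc.1 hm).2)
  -- termwise difference nonneg
  have hterm : ∀ x : ℕ, ∀ m ∈ Finset.Icc 1 p,
      (0:ℝ) ≤ U m * (if B.getD x false = true then (1:ℝ) else 0) *
          (if B.getD (x+m) false = true then (1:ℝ) else 0)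
        - U m * (if B'.getD x false = true then (1:ℝ) else 0) *
          (if B'.getD (x+m) false = true then (1:ℝ) else 0) := by
    intro x m hmm
    have h1 := ind_le_ind_set B a x
    have h2 := ind_le_ind_set B a (x + m)
    rw [← hB'] at h1 h2
    have hu := hUpos m hmm
    have key : U m * (if B'.getD x false = true then (1:ℝ) else 0) *
          (if B'.getD (x+m) false = true then (1:ℝ) else 0)
        ≤ U m * (if B.getD x false = true then (1:ℝ) else 0) *
          (if B.getD (x+m) false = true then (1:ℝ) else 0) := by
      have i1nn : (0:ℝ) ≤ (if B.getD x false = true then (1:ℝ) else 0) := by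
        split <;> norm_num
      exact mul_le_mul (mul_le_mul le_rfl h1.2 h1.1 hu) h2.2 h2.1 (mul_nonneg hu i1nn)
    linarith
  have hlen : B'.length = B.length := List.length_set
  have hinner : ∀ x ∈ Finset.range B.length,
      (0:ℝ) ≤ (∑ m ∈ Finset.Icc 1 p,
        U m * (if B.getD x false = true then (1:ℝ) else 0) *
          (if B.getD (x+m) false = true then (1:ℝ) else 0))
        - ∑ m ∈ Finset.Icc 1 p,
        U m * (if B'.getD x false = true then (1:ℝ) else 0) *
          (if B'.getD (x+m) false = true then (1:ℝ) else 0) := by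
    intro x _
    rw [← Finset.sum_sub_distrib]
    exact Finset.sum_nonneg (hterm x)
  calc U m₀ = U m₀ * (if B.getD a false = true then (1:ℝ) else 0) *
          (if B.getD (a+m₀) false = true then (1:ℝ) else 0)
        - U m₀ * (if B'.getD a false = true then (1:ℝ) else 0) *
          (if B'.getD (a+m₀) false = true then (1:ℝ) else 0) := by
          rw [hBa, hBb, hB', getD_set_self B ha]
          simp
    _ ≤ (∑ m ∈ Finset.Icc 1 p,
        U m * (if B.getD a false = true then (1:ℝ) else 0) *
          (if B.getD (a+m) false = true then (1:ℝ) else 0))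
        - ∑ m ∈ Finset.Icc 1 p,
        U m * (if B'.getD a false = true then (1:ℝ) else 0) *
          (if B'.getD (a+m) false = true then (1:ℝ) else 0) := by
          rw [← Finset.sum_sub_distrib]
          exact Finset.single_le_sum (fun m hmm => hterm a m hmm) hm
    _ ≤ ∑ x ∈ Finset.range B.length, ((∑ m ∈ Finset.Icc 1 p,
        U m * (if B.getD x false = true then (1:ℝ) else 0) *
          (if B.getD (x+m) false = true then (1:ℝ) else 0))
        - ∑ m ∈ Finset.Icc 1 p,
        U m * (if B'.getD x false = true then (1:ℝ) else 0) *
          (if B'.getD (x+m) false = true then (1:ℝ) else 0)) := by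
          refine Finset.single_le_sum hinner ?_
          exact Finset.mem_range.2 ha
    _ = eop p U B - eop p U B' := by
          rw [eop, eop, hlen, Finset.sum_sub_distrib]

lemma cnt_set (B : List Bool) {a : ℕ} (ha : a < B.length) (hBa : B.getD a false = true) :
    cnt (B.set a false) + 1 = cnt B := by
  unfold cnt
  rw [List.length_set]
  have hmem : a ∈ Finset.range B.length := Finset.mem_range.2 ha
  rw [← Finset.sum_erase_add _ _ hmem, ← Finset.sum_erase_add _ (fun x =>
    if B.getD x false = true then 1 else 0) hmem]
  have h1 : ∀ x ∈ (Finset.range B.length).erase a,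
      (if (B.set a false).getD x false = true then 1 else 0)
        = (if B.getD x false = true then 1 else 0) := by
    intro x hx
    rw [getD_set_ne B (Finset.mem_erase.1 hx).1]
  rw [Finset.sum_congr rfl h1, getD_set_self B ha, hBa]
  simp

section zmodsums

variable {L : ℕ} [NeZero L]

lemma sum_zmod {M : Type*} [AddCommMonoid M] (g : ZMod L → M) :
    ∑ x ∈ Finset.range L, g ((x : ℕ) : ZMod L) = ∑ z : ZMod L, g z := by
  refine Finset.sum_nbij' (fun x => ((x : ℕ) : ZMod L)) (fun z => z.val) ?_ ?_ ?_ ?_ ?_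
  · intro a _; exact Finset.mem_univ _
  · intro z _; exact Finset.mem_range.2 (ZMod.val_lt z)
  · intro a ha; exact ZMod.val_cast_of_lt (Finset.mem_range.1 ha)
  · intro z _; exact ZMod.natCast_rightInverse z
  · intro _ _; rfl

lemma sum_zmod_shift {M : Type*} [AddCommMonoid M] (g : ZMod L → M) (c : ZMod L) :
    ∑ z : ZMod L, g (c + z) = ∑ z : ZMod L, g z :=
  Fintype.sum_equiv (Equiv.addLeft c) _ _ (fun _ => rfl)

/-- rewriting a cyclic sum as a sum over a window starting at `i + (p+2)`,
assuming the `p+1` sites after `i` contribute nothing. -/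
lemma shift_split {M : Type*} [AddCommMonoid M] (p n₀ : ℕ) (hLn : L = n₀ + (p + 1))
    (i : ZMod L) (g : ZMod L → M)
    (hz : ∀ j : ℕ, 1 ≤ j → j ≤ p + 1 → g (i + (j : ZMod L)) = 0) :
    ∑ x ∈ Finset.range L, g ((x : ℕ) : ZMod L)
      = ∑ x ∈ Finset.range n₀, g (i + ((x + p + 2 : ℕ) : ZMod L)) := by
  subst hLn
  set c : ZMod (n₀ + (p + 1)) := i + ((p + 2 : ℕ) : ZMod (n₀ + (p + 1))) with hc
  have h2 : ∑ x ∈ Finset.range (p + 1), g (c + ((n₀ + x : ℕ) : ZMod (n₀ + (p+1)))) = 0 := by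
    refine Finset.sum_eq_zero fun j hj => ?_
    have hj' := Finset.mem_range.1 hj
    have harith : c + ((n₀ + j : ℕ) : ZMod (n₀ + (p+1)))
        = i + ((j + 1 : ℕ) : ZMod (n₀ + (p+1))) := by
      rw [hc, add_assoc, ← Nat.cast_add]
      have : (p + 2) + (n₀ + j) = (n₀ + (p + 1)) + (j + 1) := by ring
      rw [this, Nat.cast_add, ZMod.natCast_self, zero_add]
    rw [harith]
    exact hz (j + 1) (by omega) (by omega)
  rw [sum_zmod g, ← sum_zmod_shift g c, ← sum_zmod (fun z => g (c + z)),
    sumRangeAdd (fun x => g (c + ((x : ℕ) : ZMod (n₀ + (p+1))))) n₀ (p + 1), h2, add_zero]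
  refine Finset.sum_congr rfl fun x _ => ?_
  rw [hc, add_assoc, ← Nat.cast_add]
  congr 2
  ring

end zmodsums

noncomputable def fset (M : ℕ) (l : List Bool) : Finset (ZMod M) :=
  ((Finset.range M).filter (fun x => l.getD x false = true)).image (fun x => ((x : ℕ) : ZMod M))

section transfer

variable {M : ℕ}

lemma mem_fset (hM : 0 < M) (l : List Bool) (z : ZMod M) :
    haveI : NeZero M := ⟨hM.ne'⟩
    (z ∈ fset M l ↔ l.getD z.val false = true) := by
  haveI : NeZero M := ⟨hM.ne'⟩
  constructor
  · rintro hz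
    obtain ⟨x, hx, hcast⟩ := Finset.mem_image.1 hz
    obtain ⟨hxr, hxg⟩ := Finset.mem_filter.1 hx
    have : z.val = x := by rw [← hcast, ZMod.val_cast_of_lt (Finset.mem_range.1 hxr)]
    rwa [this]
  · intro h
    refine Finset.mem_image.2 ⟨z.val, Finset.mem_filter.2 ⟨Finset.mem_range.2 (ZMod.val_lt z), h⟩, ?_⟩
    exact ZMod.natCast_rightInverse z

lemma card_fset (hM : 0 < M) (l : List Bool) (hlen : l.length = M) : (fset M l).card = cnt l := by
  haveI : NeZero M := ⟨hM.ne'⟩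
  rw [fset, Finset.card_image_of_injOn, Finset.card_filter, cnt, hlen]
  intro x hx y hy hxy
  simp only [Finset.coe_filter, Set.mem_setOf_eq, Finset.mem_range] at hx hy
  have := congrArg ZMod.val hxy
  rwa [ZMod.val_cast_of_lt hx.1, ZMod.val_cast_of_lt hy.1] at this

lemma energy_fset (hM : 0 < M) (p : ℕ) (U : ℕ → ℝ) (l : List Bool) (hlen : l.length = M)
    (htail : ∀ x : ℕ, M - p ≤ x → l.getD x false = false) :
    _root_.energy M p U (fset M l) = eop p U l := by
  haveI : NeZero M := ⟨hM.ne'⟩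
  rw [_root_.energy, eop, hlen]
  refine Finset.sum_congr rfl fun x hx => Finset.sum_congr rfl fun m hm => ?_
  have hxM := Finset.mem_range.1 hx
  have hm' := Finset.mem_Icc.1 hm
  have e1 : (((x : ℕ) : ZMod M) ∈ fset M l) ↔ l.getD x false = true := by
    rw [mem_fset hM l, ZMod.val_cast_of_lt hxM]
  have e2 : (((x : ℕ) : ZMod M) + ((m : ℕ) : ZMod M) ∈ fset M l)
      ↔ l.getD ((x + m) % M) false = true := by
    rw [← Nat.cast_add, mem_fset hM l, ZMod.val_natCast]
  rcases lt_or_ge (x + m) M with hlt | hge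
  · rw [if_congr e1 rfl rfl, if_congr e2 rfl rfl, Nat.mod_eq_of_lt hlt]
  · have hx0 : l.getD x false = false := htail x (by omega)
    rw [if_congr e1 rfl rfl, hx0]
    simp

end transfer

end ALaux

open ALaux

/-- Key construction of Theorem 2 of the paper: with positive potentials, if a
configuration `S` of `N` particles on `L` sites has strictly positive energy and a
gap of length `p+1` at some occupied site, then there is a configuration of the same
particle density on some chain of `k·L` sites with strictly lower energy density. -/
theorem exists_lower_energy_density_of_gap (L p N : ℕ) (hL : 0 < L) (hp : 1 ≤ p)
    (U : ℕ → ℝ) (hU : ∀ m : ℕ, 1 ≤ m → m ≤ p → 0 < U m)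
    (S : Finset (ZMod L)) (hS : S.card = N) (hE : 0 < energy L p U S)
    (hgap : ∃ i ∈ S, ∀ j : ℕ, 1 ≤ j → j ≤ p + 1 → i + (j : ZMod L) ∉ S) :
    ∃ k : ℕ, 1 ≤ k ∧ ∃ S' : Finset (ZMod (k * L)), S'.card = k * N ∧
      energy (k * L) p U S' < (k : ℝ) * energy L p U S := by
  classical
  obtain ⟨i, hi, hgap⟩ := hgap
  haveI : NeZero L := ⟨hL.ne'⟩
  -- the gap forces L ≥ p + 2
  have hLp : p + 2 ≤ L := by
    by_contra hcon
    push_neg at hcon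
    have := hgap L (by omega) (by omega)
    rw [ZMod.natCast_self, add_zero] at this
    exact this hi
  set n₀ := L - (p + 1) with hn₀
  have hLn : L = n₀ + (p + 1) := by omega
  set B := (List.range n₀).map (fun j => decide ((i + ((j + p + 2 : ℕ) : ZMod L)) ∈ S))
    with hBdef
  have hBlen : B.length = n₀ := by simp [hBdef]
  have getD_B : ∀ x, x < n₀ →
      B.getD x false = decide ((i + ((x + p + 2 : ℕ) : ZMod L)) ∈ S) := by
    intro x hx
    rw [hBdef, List.getD_eq_getElem?_getD, List.getElem?_map, List.getElem?_range hx]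
    rfl
  -- the two "gap-killing" facts
  have hgapE : ∀ j : ℕ, 1 ≤ j → j ≤ p + 1 →
      (∑ m ∈ Finset.Icc 1 p, U m *
        (if (i + ((j : ℕ) : ZMod L)) ∈ S then (1:ℝ) else 0) *
        (if (i + ((j : ℕ) : ZMod L)) + ((m : ℕ) : ZMod L) ∈ S then (1:ℝ) else 0)) = 0 := by
    intro j h1 h2
    refine Finset.sum_eq_zero fun m _ => ?_
    rw [if_neg (hgap j h1 h2)]
    ring
  have hgapC : ∀ j : ℕ, 1 ≤ j → j ≤ p + 1 →
      (if (i + ((j : ℕ) : ZMod L)) ∈ S then (1:ℕ) else 0) = 0 := by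
    intro j h1 h2
    rw [if_neg (hgap j h1 h2)]
  -- factor matching inside the window
  have hfac1 : ∀ x, x < n₀ →
      (if (i + ((x + p + 2 : ℕ) : ZMod L)) ∈ S then (1:ℝ) else 0)
        = (if B.getD x false = true then (1:ℝ) else 0) := by
    intro x hx
    rw [getD_B x hx]
    by_cases h : (i + ((x + p + 2 : ℕ) : ZMod L)) ∈ S <;> simp [h]
  have hfacC : ∀ x, x < n₀ →
      (if (i + ((x + p + 2 : ℕ) : ZMod L)) ∈ S then (1:ℕ) else 0)
        = (if B.getD x false = true then (1:ℕ) else 0) := by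
    intro x hx
    rw [getD_B x hx]
    by_cases h : (i + ((x + p + 2 : ℕ) : ZMod L)) ∈ S <;> simp [h]
  have hfac2 : ∀ x m, x < n₀ → 1 ≤ m → m ≤ p →
      (if (i + ((x + p + 2 : ℕ) : ZMod L)) + ((m : ℕ) : ZMod L) ∈ S then (1:ℝ) else 0)
        = (if B.getD (x + m) false = true then (1:ℝ) else 0) := by
    intro x m hx h1 h2
    have hsite : (i + ((x + p + 2 : ℕ) : ZMod L)) + ((m : ℕ) : ZMod L)
        = i + ((x + m + p + 2 : ℕ) : ZMod L) := by
      push_cast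
      ring
    rw [hsite]
    rcases lt_or_ge (x + m) n₀ with hlt | hge
    · rw [getD_B (x + m) hlt]
      by_cases h : (i + ((x + m + p + 2 : ℕ) : ZMod L)) ∈ S <;> simp [h]
    · have hj : x + m + p + 2 = L + (x + m + p + 2 - L) := by omega
      have hj1 : 1 ≤ x + m + p + 2 - L := by omega
      have hj2 : x + m + p + 2 - L ≤ p + 1 := by omega
      have hsite2 : ((x + m + p + 2 : ℕ) : ZMod L) = ((x + m + p + 2 - L : ℕ) : ZMod L) := by
        conv_lhs => rw [hj]
        rw [Nat.cast_add, ZMod.natCast_self, zero_add]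
      rw [hsite2, if_neg (hgap _ hj1 hj2), getD_ge B (by omega : B.length ≤ x + m)]
      simp
  -- energy of S equals the open energy of the word B
  have hEB : energy L p U S = eop p U B := by
    rw [energy, shift_split p n₀ hLn i
      (fun z => ∑ m ∈ Finset.Icc 1 p, U m * (if z ∈ S then (1:ℝ) else 0) *
        (if z + ((m : ℕ) : ZMod L) ∈ S then (1:ℝ) else 0)) hgapE, eop, hBlen]
    refine Finset.sum_congr rfl fun x hx => Finset.sum_congr rfl fun m hm => ?_
    have hx' := Finset.mem_range.1 hx
    have hm' := Finset.mem_Icc.1 hm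
    rw [hfac1 x hx', hfac2 x m hx' hm'.1 hm'.2]
  -- cardinality of S equals the count of the word B
  have hNB : N = cnt B := by
    have h0 : S.card = ∑ z : ZMod L, (if z ∈ S then (1:ℕ) else 0) := by
      rw [Finset.sum_ite_mem]
      simp
    rw [← hS, h0, ← sum_zmod (fun z => if z ∈ S then (1:ℕ) else 0),
      shift_split p n₀ hLn i (fun z => if z ∈ S then (1:ℕ) else 0) hgapC, cnt, hBlen]
    exact Finset.sum_congr rfl fun x hx => hfacC x (Finset.mem_range.1 hx)
  -- extract a positive bond
  have hpair : ∃ x : ℕ, ∃ m₀, m₀ ∈ Finset.Icc 1 p ∧ ((x : ℕ) : ZMod L) ∈ S ∧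
      ((x : ℕ) : ZMod L) + ((m₀ : ℕ) : ZMod L) ∈ S := by
    by_contra hcon
    push_neg at hcon
    have : energy L p U S = 0 := by
      rw [energy]
      refine Finset.sum_eq_zero fun x _ => Finset.sum_eq_zero fun m hm => ?_
      by_cases h1 : ((x : ℕ) : ZMod L) ∈ S
      · rw [if_neg (hcon x m hm h1)]
        ring
      · rw [if_neg h1]
        ring
    rw [this] at hE
    exact lt_irrefl 0 hE
  obtain ⟨x, m₀, hm₀, hx1, hx2⟩ := hpair
  have hm₀' := Finset.mem_Icc.1 hm₀
  set z : ZMod L := ((x : ℕ) : ZMod L) with hz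
  set d := (z - i).val with hd
  have hzd : z = i + ((d : ℕ) : ZMod L) := by
    rw [hd, ZMod.natCast_rightInverse (z - i)]
    ring
  have hdL : d < L := ZMod.val_lt _
  have hd2 : p + 2 ≤ d := by
    by_contra hcon
    push_neg at hcon
    rcases Nat.eq_zero_or_pos d with h0 | h0
    · rw [h0] at hzd
      simp at hzd
      rw [hzd] at hx2
      exact hgap m₀ hm₀'.1 (by omega) hx2
    · rw [hzd] at hx1
      exact hgap d h0 (by omega) hx1
  set a := d - (p + 2) with ha
  have had : a + p + 2 = d := by omega
  have haN : a < n₀ := by omega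
  have hBa : B.getD a false = true := by
    rw [getD_B a haN, had, decide_eq_true_eq, ← hzd]
    exact hx1
  have hBb : B.getD (a + m₀) false = true := by
    rcases lt_or_ge (a + m₀) n₀ with hlt | hge
    · rw [getD_B (a + m₀) hlt, decide_eq_true_eq]
      have : i + ((a + m₀ + p + 2 : ℕ) : ZMod L) = z + ((m₀ : ℕ) : ZMod L) := by
        rw [hzd, ← had]
        push_cast
        ring
      rw [this]
      exact hx2
    · exfalso
      have hj : d + m₀ = L + (d + m₀ - L) := by omega
      have hj1 : 1 ≤ d + m₀ - L := by omega
      have hj2 : d + m₀ - L ≤ p + 1 := by omega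
      have : z + ((m₀ : ℕ) : ZMod L) = i + ((d + m₀ - L : ℕ) : ZMod L) := by
        rw [hzd, add_assoc, ← Nat.cast_add]
        conv_lhs => rw [hj]
        rw [Nat.cast_add, ZMod.natCast_self, zero_add]
      rw [this] at hx2
      exact hgap _ hj1 hj2 hx2
  -- build the new word on (p+1)*L sites
  set F := List.replicate p false with hF
  set B' := B.set a false with hB'
  set Rpre := B' ++ (F ++ ([true] ++ repL p (F ++ B))) with hRpre
  set R := Rpre ++ F with hR
  set M := (p + 1) * L with hM
  have hMpos : 0 < M := by positivity
  have hRlen : R.length = M := by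
    rw [hR, hRpre, hB', hF]
    simp only [List.length_append, List.length_set, List.length_replicate,
      List.length_cons, List.length_nil, length_repL, hBlen]
    rw [hM, hLn]
    ring
  have hFs : startsF p F := startsF_F p p le_rfl
  have hFBs : startsF p (F ++ B) := startsF_app_left p B hFs (by rw [hF]; simp)
  have htail : ∀ x : ℕ, M - p ≤ x → R.getD x false = false := by
    intro x hx
    rcases lt_or_ge x M with hlt | hge
    · rw [hR, getD_app_ge _ _ (by
        have := hRlen
        rw [hR, List.length_append, hF, List.length_replicate] at this
        omega)]
      rw [hF, getD_F]
    · rw [getD_ge R (by omega)]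
  -- energy of the new word
  have hEop : eop p U R = eop p U B' + (p : ℝ) * eop p U B := by
    rw [hR, eop_append p U Rpre F hFs, eop_F, add_zero, hRpre,
      eop_append p U B' _ (startsF_app_left p _ hFs (by rw [hF]; simp)),
      eop_front p U p _,
      eop_append p U [true] _ (startsF_repL p p hFBs),
      eop_true p U hp, zero_add,
      eop_repL p U p _ hFBs, eop_front p U p B]
  have hcnt : cnt R = cnt B' + (1 + p * cnt B) := by
    rw [hR, cnt_append, cnt_F, add_zero, hRpre, cnt_append, cnt_append,
      cnt_F, zero_add, cnt_append, cnt_repL, cnt_append, cnt_F, zero_add, cnt_true]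
  have hcnt1 : cnt B' + 1 = cnt B := by
    rw [hB']
    exact cnt_set B (by omega) hBa
  -- the fermion removal strictly decreases the open energy
  have hdec : U m₀ ≤ eop p U B - eop p U B' := by
    rw [hB']
    exact eop_set_le p U hU B hm₀ (by omega) hBa hBb
  have hUm₀ : 0 < U m₀ := hU m₀ hm₀'.1 hm₀'.2
  -- assemble
  refine ⟨p + 1, by omega, fset M R, ?_, ?_⟩
  · rw [card_fset hMpos R hRlen, hcnt, ← hNB]
    have : cnt B' = N - 1 := by omega
    rw [this]
    have hN1 : 1 ≤ N := by omega
    cases' N with n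
    · omega
    · simp [Nat.succ_sub_one]
      ring
  · rw [energy_fset hMpos p U R hRlen htail, hEop, hEB]
    have hcast : ((p + 1 : ℕ) : ℝ) = (p : ℝ) + 1 := by push_cast; ring
    rw [hcast]
    nlinarith [hdec, hUm₀]
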